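/- arXiv:1308.4454 — 3 statements merged into one kernel-verified Lean document; each statement's English description precedes it below -/
import Mathlib

section
/- Let φ : ℝ → E be twice continuously differentiable on [0,T]. Then Δt · Σ_{n=0}^{N−1} ‖d_t φ^{n+1} − φ′(t_{n+1})‖² ≤ (Δt²/3) · ∫_0^T ‖φ″(t)‖² dt. (This is the backward-difference consistency estimate used in the consistency-error lemma of the paper.) -/
open MeasureTheory Set

lemma cs_integral (a b : ℝ) (hab : a ≤ b) (f g : ℝ → ℝ)
    (hf : ContinuousOn f (Set.Icc a b)) (hg : ContinuousOn g (Set.Icc a b))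
    (hf0 : ∀ s ∈ Set.Icc a b, 0 ≤ f s) (hg0 : ∀ s ∈ Set.Icc a b, 0 ≤ g s) :
    (∫ s in a..b, f s * g s) ^ 2 ≤ (∫ s in a..b, f s ^ 2) * (∫ s in a..b, g s ^ 2) := by
  have hsub : Set.Ioc a b ⊆ Set.Icc a b := Set.Ioc_subset_Icc_self
  set μ := MeasureTheory.volume.restrict (Set.Ioc a b) with hμdef
  have hae : ∀ {h : ℝ → ℝ}, (∀ s ∈ Set.Icc a b, 0 ≤ h s) → 0 ≤ᵐ[μ] h := by
    intro h h0
    rw [hμdef]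
    filter_upwards [MeasureTheory.ae_restrict_mem measurableSet_Ioc] with s hs
    exact h0 s (hsub hs)
  have hfm : MeasureTheory.AEStronglyMeasurable f μ :=
    (hf.mono hsub).aestronglyMeasurable measurableSet_Ioc
  have hgm : MeasureTheory.AEStronglyMeasurable g μ :=
    (hg.mono hsub).aestronglyMeasurable measurableSet_Ioc
  have hf2 : MeasureTheory.MemLp f 2 μ := by
    rw [MeasureTheory.memLp_two_iff_integrable_sq hfm]
    exact ((hf.pow 2).integrableOn_Icc).mono_set hsub
  have hg2 : MeasureTheory.MemLp g 2 μ := by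
    rw [MeasureTheory.memLp_two_iff_integrable_sq hgm]
    exact ((hg.pow 2).integrableOn_Icc).mono_set hsub
  have hconj : (2:ℝ).HolderConjugate 2 := Real.HolderConjugate.two_two
  have h2 : (ENNReal.ofReal (2:ℝ)) = 2 := by norm_num
  have hH := MeasureTheory.integral_mul_le_Lp_mul_Lq_of_nonneg hconj (hae hf0) (hae hg0)
    (h2 ▸ hf2) (h2 ▸ hg2)
  have hrw : ∀ x : ℝ, x ^ (2:ℝ) = x ^ (2:ℕ) := fun x => by
    rw [show ((2:ℝ)) = ((2:ℕ):ℝ) by norm_num, Real.rpow_natCast]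
  simp only [hrw] at hH
  have hX : 0 ≤ ∫ s, f s ^ 2 ∂μ := integral_nonneg fun s => sq_nonneg _
  have hY : 0 ≤ ∫ s, g s ^ 2 ∂μ := integral_nonneg fun s => sq_nonneg _
  have hL : 0 ≤ ∫ s, f s * g s ∂μ := by
    refine integral_nonneg_of_ae ?_
    filter_upwards [hae hf0, hae hg0] with s h1 h2
    exact mul_nonneg h1 h2
  rw [intervalIntegral.integral_of_le hab, intervalIntegral.integral_of_le hab,
    intervalIntegral.integral_of_le hab]
  calc (∫ s, f s * g s ∂μ) ^ 2
      ≤ ((∫ s, f s ^ 2 ∂μ) ^ ((1:ℝ)/2) * (∫ s, g s ^ 2 ∂μ) ^ ((1:ℝ)/2)) ^ 2 := by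
        apply pow_le_pow_left₀ hL hH
    _ = (∫ s, f s ^ 2 ∂μ) * (∫ s, g s ^ 2 ∂μ) := by
        rw [mul_pow, ← Real.rpow_natCast (_ ^ ((1:ℝ)/2)) 2, ← Real.rpow_natCast (_ ^ ((1:ℝ)/2)) 2,
          ← Real.rpow_mul hX, ← Real.rpow_mul hY]
        norm_num

lemma taylor_id {E : Type*} [NormedAddCommGroup E] [NormedSpace ℝ E] [CompleteSpace E]
    (T : ℝ) (φ φ' φ'' : ℝ → E)
    (hφ' : ∀ t ∈ Set.Icc (0:ℝ) T, HasDerivWithinAt φ (φ' t) (Set.Icc (0:ℝ) T) t)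
    (hφ'' : ∀ t ∈ Set.Icc (0:ℝ) T, HasDerivWithinAt φ' (φ'' t) (Set.Icc (0:ℝ) T) t)
    (hφ''c : ContinuousOn φ'' (Set.Icc (0:ℝ) T))
    (a b : ℝ) (ha : 0 ≤ a) (hab : a ≤ b) (hb : b ≤ T) :
    φ b - φ a - (b - a) • φ' b = -∫ s in a..b, (s - a) • φ'' s := by
  have hsub : Set.Icc a b ⊆ Set.Icc 0 T := Set.Icc_subset_Icc ha hb
  have hφc : ContinuousOn φ (Set.Icc (0:ℝ) T) := fun t ht => (hφ' t ht).continuousWithinAt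
  have hφ'cont : ContinuousOn φ' (Set.Icc (0:ℝ) T) := fun t ht => (hφ'' t ht).continuousWithinAt
  set F : ℝ → E := fun s => φ s - (s - a) • φ' s with hF
  have hFc : ContinuousOn F (Set.Icc a b) :=
    (hφc.mono hsub).sub (((continuousOn_id).sub continuousOn_const).smul (hφ'cont.mono hsub))
  have hderiv : ∀ x ∈ Set.Ioo a b, HasDerivAt F (-((x - a) • φ'' x)) x := by
    intro x hx
    have hx0T : x ∈ Set.Icc (0:ℝ) T := hsub (Set.Ioo_subset_Icc_self hx)
    have hnhds : Set.Icc (0:ℝ) T ∈ nhds x := by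
      apply Icc_mem_nhds
      · exact lt_of_le_of_lt ha hx.1
      · exact lt_of_lt_of_le hx.2 hb
    have h1 : HasDerivAt φ (φ' x) x := (hφ' x hx0T).hasDerivAt hnhds
    have h2 : HasDerivAt φ' (φ'' x) x := (hφ'' x hx0T).hasDerivAt hnhds
    have h3 : HasDerivAt (fun s : ℝ => s - a) 1 x := (hasDerivAt_id x).sub_const a
    have h4 : HasDerivAt (fun s => (s - a) • φ' s) ((x - a) • φ'' x + (1:ℝ) • φ' x) x :=
      h3.smul h2
    have := h1.sub h4
    convert this using 1
    case e'_8 => rfl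
    module
  have hint : IntervalIntegrable (fun s => -((s - a) • φ'' s)) MeasureTheory.volume a b := by
    apply ContinuousOn.intervalIntegrable
    rw [Set.uIcc_of_le hab]
    exact (((continuousOn_id).sub continuousOn_const).smul (hφ''c.mono hsub)).neg
  have key := intervalIntegral.integral_eq_sub_of_hasDeriv_right_of_le hab hFc
    (fun x hx => (hderiv x hx).hasDerivWithinAt) hint
  rw [intervalIntegral.integral_neg] at key
  have : F b - F a = φ b - φ a - (b - a) • φ' b := by
    simp only [hF]
    rw [sub_self, zero_smul, sub_zero]
    abel
  rw [this] at key
  exact key.symm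

/-- Backward-difference consistency estimate: for φ twice continuously
differentiable on [0,T], with Δt = T/N and tₙ = n·Δt,
Δt · Σ_{n=0}^{N−1} ‖d_t φ^{n+1} − φ′(t_{n+1})‖² ≤ (Δt²/3) · ∫₀^T ‖φ″‖². -/
theorem backward_difference_consistency
    {E : Type*} [NormedAddCommGroup E] [NormedSpace ℝ E] [CompleteSpace E]
    (T : ℝ) (hT : 0 < T) (N : ℕ) (hN : 1 ≤ N)
    (Δt : ℝ) (hΔt : Δt = T / N)
    (φ φ' φ'' : ℝ → E)
    (hφ' : ∀ t ∈ Set.Icc (0:ℝ) T, HasDerivWithinAt φ (φ' t) (Set.Icc (0:ℝ) T) t)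
    (hφ'' : ∀ t ∈ Set.Icc (0:ℝ) T, HasDerivWithinAt φ' (φ'' t) (Set.Icc (0:ℝ) T) t)
    (hφ''c : ContinuousOn φ'' (Set.Icc (0:ℝ) T)) :
    Δt * ∑ n ∈ Finset.range N,
        ‖Δt⁻¹ • (φ (((n : ℝ) + 1) * Δt) - φ ((n : ℝ) * Δt)) - φ' (((n : ℝ) + 1) * Δt)‖ ^ 2
      ≤ (Δt ^ 2 / 3) * ∫ t in (0:ℝ)..T, ‖φ'' t‖ ^ 2 := by
  have hNpos : (0:ℝ) < N := by exact_mod_cast Nat.lt_of_lt_of_le Nat.zero_lt_one hN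
  have hΔtpos : 0 < Δt := by rw [hΔt]; positivity
  have hNT : (N:ℝ) * Δt = T := by
    rw [hΔt]; field_simp
  -- membership facts
  have hmem : ∀ n : ℕ, n ≤ N → (n:ℝ) * Δt ∈ Set.Icc (0:ℝ) T := by
    intro n hn
    constructor
    · positivity
    · rw [← hNT]
      apply mul_le_mul_of_nonneg_right _ hΔtpos.le
      exact_mod_cast hn
  -- per-term bound
  have hterm : ∀ n ∈ Finset.range N,
      ‖Δt⁻¹ • (φ (((n : ℝ) + 1) * Δt) - φ ((n : ℝ) * Δt)) - φ' (((n : ℝ) + 1) * Δt)‖ ^ 2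
        ≤ (Δt / 3) * ∫ s in ((n:ℝ)*Δt)..(((n:ℝ)+1)*Δt), ‖φ'' s‖ ^ 2 := by
    intro n hn
    rw [Finset.mem_range] at hn
    set a := (n:ℝ) * Δt with hadef
    set b := ((n:ℝ) + 1) * Δt with hbdef
    have hab : a ≤ b := by
      rw [hadef, hbdef]
      apply mul_le_mul_of_nonneg_right _ hΔtpos.le
      linarith
    have ha0 : 0 ≤ a := by positivity
    have hbT : b ≤ T := by
      have : ((n:ℝ)+1) * Δt = ((n+1:ℕ):ℝ) * Δt := by push_cast; ring
      rw [hbdef, this]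
      exact (hmem (n+1) hn).2
    have hba : b - a = Δt := by rw [hadef, hbdef]; ring
    have hsub : Set.Icc a b ⊆ Set.Icc 0 T := Set.Icc_subset_Icc ha0 hbT
    have hid := taylor_id T φ φ' φ'' hφ' hφ'' hφ''c a b ha0 hab hbT
    set I := ∫ s in a..b, (s - a) • φ'' s with hI
    have heq : Δt⁻¹ • (φ b - φ a) - φ' b = Δt⁻¹ • (-I) := by
      rw [hba] at hid
      rw [← hid]
      simp only [smul_sub, smul_smul, inv_mul_cancel₀ hΔtpos.ne', one_smul]
    have hnormI : ‖I‖ ≤ ∫ s in a..b, (s - a) * ‖φ'' s‖ := by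
      calc ‖I‖ ≤ ∫ s in a..b, ‖(s - a) • φ'' s‖ :=
            intervalIntegral.norm_integral_le_integral_norm hab
        _ = ∫ s in a..b, (s - a) * ‖φ'' s‖ := by
            apply intervalIntegral.integral_congr
            intro s hs
            rw [Set.uIcc_of_le hab] at hs
            show ‖(s - a) • φ'' s‖ = (s - a) * ‖φ'' s‖
            rw [norm_smul, Real.norm_of_nonneg (by linarith [hs.1])]
    have hcs := cs_integral a b hab (fun s => s - a) (fun s => ‖φ'' s‖)
      ((continuousOn_id).sub continuousOn_const) ((hφ''c.mono hsub).norm)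
      (fun s hs => by simpa using sub_nonneg.mpr hs.1) (fun s _ => norm_nonneg _)
    have hpoly : (∫ s in a..b, (s - a) ^ 2) = Δt ^ 3 / 3 := by
      have h1 : (∫ s in a..b, (s - a) ^ 2) = ∫ s in (a-a)..(b-a), s ^ 2 :=
        (intervalIntegral.integral_comp_sub_right (fun s => s ^ 2) a)
      rw [h1, sub_self, hba, integral_pow]
      norm_num
    have hInn : 0 ≤ ∫ s in a..b, ‖φ'' s‖ ^ 2 := by
      apply intervalIntegral.integral_nonneg hab
      intro s _; positivity
    have hI2 : ‖I‖ ^ 2 ≤ (Δt ^ 3 / 3) * ∫ s in a..b, ‖φ'' s‖ ^ 2 := by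
      calc ‖I‖ ^ 2 ≤ (∫ s in a..b, (s - a) * ‖φ'' s‖) ^ 2 :=
            pow_le_pow_left₀ (norm_nonneg _) hnormI 2
        _ ≤ (∫ s in a..b, (s - a) ^ 2) * (∫ s in a..b, ‖φ'' s‖ ^ 2) := hcs
        _ = (Δt ^ 3 / 3) * ∫ s in a..b, ‖φ'' s‖ ^ 2 := by rw [hpoly]
    rw [heq, norm_smul, norm_neg, mul_pow]
    have : ‖Δt⁻¹‖ ^ 2 = Δt⁻¹ ^ 2 := by
      rw [Real.norm_of_nonneg (by positivity)]
    rw [this]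
    calc Δt⁻¹ ^ 2 * ‖I‖ ^ 2 ≤ Δt⁻¹ ^ 2 * ((Δt ^ 3 / 3) * ∫ s in a..b, ‖φ'' s‖ ^ 2) :=
          mul_le_mul_of_nonneg_left hI2 (by positivity)
      _ = (Δt / 3) * ∫ s in a..b, ‖φ'' s‖ ^ 2 := by
          field_simp
  -- summation
  have hintk : ∀ k : ℕ, k < N → IntervalIntegrable (fun s => ‖φ'' s‖ ^ 2)
      MeasureTheory.volume ((fun m : ℕ => (m:ℝ) * Δt) k) ((fun m : ℕ => (m:ℝ) * Δt) (k+1)) := by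
    intro k hk
    apply ContinuousOn.intervalIntegrable
    apply ((hφ''c.norm).pow 2).mono
    rw [Set.uIcc_of_le]
    · apply Set.Icc_subset_Icc (hmem k hk.le).1
      exact (hmem (k+1) hk).2
    · apply mul_le_mul_of_nonneg_right _ hΔtpos.le
      push_cast; linarith
  have hsum := intervalIntegral.sum_integral_adjacent_intervals (a := fun m : ℕ => (m:ℝ) * Δt)
    (f := fun s => ‖φ'' s‖ ^ 2) (n := N) hintk
  simp only [Nat.cast_zero, zero_mul, hNT] at hsum
  calc Δt * ∑ n ∈ Finset.range N,
        ‖Δt⁻¹ • (φ (((n : ℝ) + 1) * Δt) - φ ((n : ℝ) * Δt)) - φ' (((n : ℝ) + 1) * Δt)‖ ^ 2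
      ≤ Δt * ∑ n ∈ Finset.range N,
          (Δt / 3) * ∫ s in ((n:ℝ)*Δt)..(((n:ℝ)+1)*Δt), ‖φ'' s‖ ^ 2 :=
        mul_le_mul_of_nonneg_left (Finset.sum_le_sum hterm) hΔtpos.le
    _ = (Δt ^ 2 / 3) * ∑ n ∈ Finset.range N,
          ∫ s in ((n:ℝ)*Δt)..(((n:ℝ)+1)*Δt), ‖φ'' s‖ ^ 2 := by
        rw [Finset.mul_sum, Finset.mul_sum]
        congr 1
        ext n
        ring
    _ = (Δt ^ 2 / 3) * ∫ t in (0:ℝ)..T, ‖φ'' t‖ ^ 2 := by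
        congr 1
        rw [← hsum]
        apply Finset.sum_congr rfl
        intro n _
        congr 1
        push_cast
        ring
end

section
/- Assume N ≥ 2 and let φ : ℝ → E be three times continuously differentiable on [0,T]. Then Δt · Σ_{n=1}^{N−1} ‖d_{tt} φ^{n+1} − (φ′(t_{n+1}) − φ′(t_n))/Δt‖² ≤ 2·Δt² · ∫_0^T ‖φ‴(t)‖² dt. (Consistency estimate for the discrete second time difference from the consistency-error lemma of the paper.) -/
open MeasureTheory intervalIntegral Set

/-- FTC helper: first-order Taylor identity for `φ'` with kernel `(c - s)`. -/
lemma sdc_taylor2 {E : Type*} [NormedAddCommGroup E] [NormedSpace ℝ E] [CompleteSpace E]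
    {T : ℝ} {φ' φ'' φ''' : ℝ → E}
    (hφ'' : ∀ t ∈ Set.Icc (0:ℝ) T, HasDerivWithinAt φ' (φ'' t) (Set.Icc (0:ℝ) T) t)
    (hφ''' : ∀ t ∈ Set.Icc (0:ℝ) T, HasDerivWithinAt φ'' (φ''' t) (Set.Icc (0:ℝ) T) t)
    (hφ'''c : ContinuousOn φ''' (Set.Icc (0:ℝ) T))
    (c : ℝ) {a b : ℝ} (ha : 0 ≤ a) (hab : a ≤ b) (hb : b ≤ T) :
    ∫ s in a..b, (c - s) • φ''' s
      = (φ' b + (c - b) • φ'' b) - (φ' a + (c - a) • φ'' a) := by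
  have hsub : Set.Icc a b ⊆ Set.Icc (0:ℝ) T := Set.Icc_subset_Icc ha hb
  have hc' : ContinuousOn φ' (Set.Icc (0:ℝ) T) := fun t ht => (hφ'' t ht).continuousWithinAt
  have hc'' : ContinuousOn φ'' (Set.Icc (0:ℝ) T) := fun t ht => (hφ''' t ht).continuousWithinAt
  apply intervalIntegral.integral_eq_sub_of_hasDeriv_right_of_le hab
  · exact (hc'.mono hsub).add
      (((continuous_const.sub continuous_id).continuousOn).smul (hc''.mono hsub))
  · intro x hx
    have hx1 : (0:ℝ) < x := lt_of_le_of_lt ha hx.1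
    have hx2 : x < T := lt_of_lt_of_le hx.2 hb
    have hmem : Set.Icc (0:ℝ) T ∈ nhds x := Icc_mem_nhds hx1 hx2
    have hxI : x ∈ Set.Icc (0:ℝ) T := ⟨hx1.le, hx2.le⟩
    have d1 : HasDerivAt φ' (φ'' x) x := (hφ'' x hxI).hasDerivAt hmem
    have d2 : HasDerivAt φ'' (φ''' x) x := (hφ''' x hxI).hasDerivAt hmem
    have d3 : HasDerivAt (fun s : ℝ => c - s) (-1 : ℝ) x := by
      simpa using (hasDerivAt_id x).const_sub c
    have d4 := d1.add (d3.smul d2)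
    have heq : φ'' x + ((c - x) • φ''' x + (-1 : ℝ) • φ'' x) = (c - x) • φ''' x := by
      module
    rw [heq] at d4
    exact d4.hasDerivWithinAt
  · apply ContinuousOn.intervalIntegrable
    rw [Set.uIcc_of_le hab]
    exact ((continuous_const.sub continuous_id).continuousOn).smul (hφ'''c.mono hsub)

/-- FTC helper: second-order Taylor identity for `φ` with kernel `(c - s)^2/2`. -/
lemma sdc_taylor3 {E : Type*} [NormedAddCommGroup E] [NormedSpace ℝ E] [CompleteSpace E]
    {T : ℝ} {φ φ' φ'' φ''' : ℝ → E}
    (hφ' : ∀ t ∈ Set.Icc (0:ℝ) T, HasDerivWithinAt φ (φ' t) (Set.Icc (0:ℝ) T) t)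
    (hφ'' : ∀ t ∈ Set.Icc (0:ℝ) T, HasDerivWithinAt φ' (φ'' t) (Set.Icc (0:ℝ) T) t)
    (hφ''' : ∀ t ∈ Set.Icc (0:ℝ) T, HasDerivWithinAt φ'' (φ''' t) (Set.Icc (0:ℝ) T) t)
    (hφ'''c : ContinuousOn φ''' (Set.Icc (0:ℝ) T))
    (c : ℝ) {a b : ℝ} (ha : 0 ≤ a) (hab : a ≤ b) (hb : b ≤ T) :
    ∫ s in a..b, ((c - s)^2/2) • φ''' s
      = (φ b + (c - b) • φ' b + ((c - b)^2/2) • φ'' b)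
        - (φ a + (c - a) • φ' a + ((c - a)^2/2) • φ'' a) := by
  have hsub : Set.Icc a b ⊆ Set.Icc (0:ℝ) T := Set.Icc_subset_Icc ha hb
  have hc : ContinuousOn φ (Set.Icc (0:ℝ) T) := fun t ht => (hφ' t ht).continuousWithinAt
  have hc' : ContinuousOn φ' (Set.Icc (0:ℝ) T) := fun t ht => (hφ'' t ht).continuousWithinAt
  have hc'' : ContinuousOn φ'' (Set.Icc (0:ℝ) T) := fun t ht => (hφ''' t ht).continuousWithinAt
  have hk1 : Continuous (fun s : ℝ => c - s) := continuous_const.sub continuous_id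
  have hk2 : Continuous (fun s : ℝ => (c - s)^2/2) := by fun_prop
  apply intervalIntegral.integral_eq_sub_of_hasDeriv_right_of_le hab
  · exact ((hc.mono hsub).add (hk1.continuousOn.smul (hc'.mono hsub))).add
      (hk2.continuousOn.smul (hc''.mono hsub))
  · intro x hx
    have hx1 : (0:ℝ) < x := lt_of_le_of_lt ha hx.1
    have hx2 : x < T := lt_of_lt_of_le hx.2 hb
    have hmem : Set.Icc (0:ℝ) T ∈ nhds x := Icc_mem_nhds hx1 hx2
    have hxI : x ∈ Set.Icc (0:ℝ) T := ⟨hx1.le, hx2.le⟩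
    have d0 : HasDerivAt φ (φ' x) x := (hφ' x hxI).hasDerivAt hmem
    have d1 : HasDerivAt φ' (φ'' x) x := (hφ'' x hxI).hasDerivAt hmem
    have d2 : HasDerivAt φ'' (φ''' x) x := (hφ''' x hxI).hasDerivAt hmem
    have d3 : HasDerivAt (fun s : ℝ => c - s) (-1 : ℝ) x := by
      simpa using (hasDerivAt_id x).const_sub c
    have d4 : HasDerivAt (fun s : ℝ => (c - s)^2/2) (-(c - x)) x := by
      have := (d3.pow 2).div_const 2
      exact this.congr_deriv (by norm_num; ring)
    have d5 := (d0.add (d3.smul d1)).add (d4.smul d2)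
    have heq : φ' x + ((c - x) • φ'' x + (-1 : ℝ) • φ' x)
        + (((c - x)^2/2) • φ''' x + (-(c - x)) • φ'' x) = ((c - x)^2/2) • φ''' x := by
      module
    rw [heq] at d5
    exact d5.hasDerivWithinAt
  · apply ContinuousOn.intervalIntegrable
    rw [Set.uIcc_of_le hab]
    exact hk2.continuousOn.smul (hφ'''c.mono hsub)

/-- Cauchy–Schwarz for interval integrals of real functions. -/
lemma sdc_cs {g : ℝ → ℝ} {a b : ℝ} (hab : a ≤ b)
    (hg : IntervalIntegrable g MeasureTheory.volume a b)
    (hg2 : IntervalIntegrable (fun s => g s ^ 2) MeasureTheory.volume a b) :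
    (∫ s in a..b, g s) ^ 2 ≤ (b - a) * ∫ s in a..b, g s ^ 2 := by
  rcases eq_or_lt_of_le hab with rfl | hlt
  · simp
  have hL : (0:ℝ) < b - a := sub_pos.mpr hlt
  set S := ∫ s in a..b, g s with hS
  set Q := ∫ s in a..b, g s ^ 2 with hQ
  have h0 : 0 ≤ ∫ s in a..b, ((b - a) * g s - S)^2 :=
    intervalIntegral.integral_nonneg hab fun _ _ => sq_nonneg _
  have hexp : ∫ s in a..b, ((b - a) * g s - S)^2
      = (b - a)^2 * Q - (2*(b-a)*S) * S + S^2 * (b - a) := by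
    have e : (fun s => ((b - a) * g s - S)^2)
        = fun s => ((b-a)^2 * g s ^ 2 - (2*(b-a)*S) * g s) + S^2 := by
      funext s; ring
    rw [e, intervalIntegral.integral_add ((hg2.const_mul _).sub (hg.const_mul _))
          intervalIntegrable_const,
        intervalIntegral.integral_sub (hg2.const_mul _) (hg.const_mul _),
        intervalIntegral.integral_const_mul, intervalIntegral.integral_const_mul,
        intervalIntegral.integral_const, smul_eq_mul]
    rw [← hS, ← hQ]; ring
  rw [hexp] at h0
  nlinarith [h0, hL]

set_option maxHeartbeats 1000000 in
/-- Key per-interval estimate. -/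
lemma sdc_key {E : Type*} [NormedAddCommGroup E] [NormedSpace ℝ E] [CompleteSpace E]
    {T : ℝ} {φ φ' φ'' φ''' : ℝ → E}
    (hφ' : ∀ t ∈ Set.Icc (0:ℝ) T, HasDerivWithinAt φ (φ' t) (Set.Icc (0:ℝ) T) t)
    (hφ'' : ∀ t ∈ Set.Icc (0:ℝ) T, HasDerivWithinAt φ' (φ'' t) (Set.Icc (0:ℝ) T) t)
    (hφ''' : ∀ t ∈ Set.Icc (0:ℝ) T, HasDerivWithinAt φ'' (φ''' t) (Set.Icc (0:ℝ) T) t)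
    (hφ'''c : ContinuousOn φ''' (Set.Icc (0:ℝ) T))
    {Δt : ℝ} (hΔt0 : 0 < Δt) {a m b : ℝ}
    (hm : m = a + Δt) (hb : b = a + 2*Δt) (ha0 : 0 ≤ a) (hbT : b ≤ T) :
    ‖(Δt ^ 2)⁻¹ • (φ b - (2:ℝ) • φ m + φ a) - Δt⁻¹ • (φ' b - φ' m)‖ ^ 2
      ≤ Δt / 2 * ((∫ s in m..b, ‖φ''' s‖ ^ 2) + ∫ s in a..m, ‖φ''' s‖ ^ 2) := by
  subst hm hb
  have hΔne : Δt ≠ 0 := hΔt0.ne'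
  have ham : a ≤ a + Δt := by linarith
  have hmb : a + Δt ≤ a + 2*Δt := by linarith
  have hm0 : 0 ≤ a + Δt := by linarith
  have hmT : a + Δt ≤ T := by linarith
  have hbT' : a + 2*Δt ≤ T := hbT
  -- integrability helpers
  have mkint : ∀ (k : ℝ → ℝ), Continuous k → ∀ {p q : ℝ}, 0 ≤ p → p ≤ q → q ≤ T →
      IntervalIntegrable (fun s => k s • φ''' s) MeasureTheory.volume p q := by
    intro k hk p q hp hpq hq
    apply ContinuousOn.intervalIntegrable
    rw [Set.uIcc_of_le hpq]
    exact hk.continuousOn.smul (hφ'''c.mono (Set.Icc_subset_Icc hp hq))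
  have mkintN : ∀ (k : ℝ → ℝ), Continuous k → ∀ {p q : ℝ}, 0 ≤ p → p ≤ q → q ≤ T →
      IntervalIntegrable (fun s => ‖k s • φ''' s‖) MeasureTheory.volume p q := by
    intro k hk p q hp hpq hq
    apply ContinuousOn.intervalIntegrable
    rw [Set.uIcc_of_le hpq]
    exact (hk.continuousOn.smul (hφ'''c.mono (Set.Icc_subset_Icc hp hq))).norm
  have mkintR : ∀ {p q : ℝ}, 0 ≤ p → p ≤ q → q ≤ T →
      IntervalIntegrable (fun s => Δt^2/2 * ‖φ''' s‖) MeasureTheory.volume p q := by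
    intro p q hp hpq hq
    apply ContinuousOn.intervalIntegrable
    rw [Set.uIcc_of_le hpq]
    exact continuousOn_const.mul ((hφ'''c.mono (Set.Icc_subset_Icc hp hq)).norm)
  have mkintNrm : ∀ {p q : ℝ}, 0 ≤ p → p ≤ q → q ≤ T →
      IntervalIntegrable (fun s => ‖φ''' s‖) MeasureTheory.volume p q := by
    intro p q hp hpq hq
    apply ContinuousOn.intervalIntegrable
    rw [Set.uIcc_of_le hpq]
    exact (hφ'''c.mono (Set.Icc_subset_Icc hp hq)).norm
  have mkintSq : ∀ {p q : ℝ}, 0 ≤ p → p ≤ q → q ≤ T →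
      IntervalIntegrable (fun s => ‖φ''' s‖^2) MeasureTheory.volume p q := by
    intro p q hp hpq hq
    apply ContinuousOn.intervalIntegrable
    rw [Set.uIcc_of_le hpq]
    exact (hφ'''c.mono (Set.Icc_subset_Icc hp hq)).norm.pow 2
  -- Taylor identities
  have E1 := sdc_taylor3 hφ' hφ'' hφ''' hφ'''c (a + 2*Δt) hm0 hmb hbT'
  have E2 := sdc_taylor3 hφ' hφ'' hφ''' hφ'''c a ha0 ham hmT
  have E3 := sdc_taylor2 hφ'' hφ''' hφ'''c (a + 2*Δt) hm0 hmb hbT'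
  set X : E := ∫ s in (a+Δt)..(a+2*Δt),
      (((a+2*Δt) - s)^2/2 - Δt*((a+2*Δt) - s)) • φ''' s with hXdef
  set Y : E := ∫ s in a..(a+Δt), ((a - s)^2/2) • φ''' s with hYdef
  have int1 : IntervalIntegrable (fun s => (((a+2*Δt) - s)^2/2) • φ''' s)
      MeasureTheory.volume (a+Δt) (a+2*Δt) := mkint _ (by fun_prop) hm0 hmb hbT'
  have int2 : IntervalIntegrable (fun s => ((a+2*Δt) - s) • φ''' s)
      MeasureTheory.volume (a+Δt) (a+2*Δt) := mkint _ (by fun_prop) hm0 hmb hbT'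
  have int3 : IntervalIntegrable (fun s => Δt • (((a+2*Δt) - s) • φ''' s))
      MeasureTheory.volume (a+Δt) (a+2*Δt) := int2.smul Δt
  have hpt : ∀ s : ℝ, (((a+2*Δt) - s)^2/2 - Δt*((a+2*Δt) - s)) • φ''' s
      = (((a+2*Δt) - s)^2/2) • φ''' s - Δt • (((a+2*Δt) - s) • φ''' s) := fun s => by
    module
  have hXsplit : X = (∫ s in (a+Δt)..(a+2*Δt), (((a+2*Δt) - s)^2/2) • φ''' s)
      - Δt • ∫ s in (a+Δt)..(a+2*Δt), ((a+2*Δt) - s) • φ''' s := by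
    rw [hXdef]
    simp only [hpt]
    rw [intervalIntegral.integral_sub int1 int3, intervalIntegral.integral_smul]
  have hA : Δt ^ 2 • ((Δt ^ 2)⁻¹ • (φ (a+2*Δt) - (2:ℝ) • φ (a+Δt) + φ a)
        - Δt⁻¹ • (φ' (a+2*Δt) - φ' (a+Δt))) = X - Y := by
    rw [smul_sub, smul_inv_smul₀ (pow_ne_zero 2 hΔne), smul_smul,
        show Δt ^ 2 * Δt⁻¹ = Δt from by field_simp [pow_two],
        hXsplit, E1, E2, E3]
    module
  have hAval : (Δt ^ 2)⁻¹ • (φ (a+2*Δt) - (2:ℝ) • φ (a+Δt) + φ a)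
        - Δt⁻¹ • (φ' (a+2*Δt) - φ' (a+Δt)) = (Δt ^ 2)⁻¹ • (X - Y) := by
    rw [← hA, inv_smul_smul₀ (pow_ne_zero 2 hΔne)]
  -- norm bounds
  have hXle : ‖X‖ ≤ Δt^2/2 * ∫ s in (a+Δt)..(a+2*Δt), ‖φ''' s‖ := by
    calc ‖X‖ ≤ ∫ s in (a+Δt)..(a+2*Δt),
          ‖(((a+2*Δt) - s)^2/2 - Δt*((a+2*Δt) - s)) • φ''' s‖ := by
          rw [hXdef]; exact intervalIntegral.norm_integral_le_integral_norm hmb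
      _ ≤ ∫ s in (a+Δt)..(a+2*Δt), Δt^2/2 * ‖φ''' s‖ := by
          apply intervalIntegral.integral_mono_on hmb
            (mkintN _ (by fun_prop) hm0 hmb hbT') (mkintR hm0 hmb hbT')
          intro s hs
          rw [norm_smul, Real.norm_eq_abs]
          apply mul_le_mul_of_nonneg_right _ (norm_nonneg _)
          rw [abs_le]
          constructor <;> nlinarith [hs.1, hs.2]
      _ = Δt^2/2 * ∫ s in (a+Δt)..(a+2*Δt), ‖φ''' s‖ := by
          rw [← intervalIntegral.integral_const_mul]
  have hYle : ‖Y‖ ≤ Δt^2/2 * ∫ s in a..(a+Δt), ‖φ''' s‖ := by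
    calc ‖Y‖ ≤ ∫ s in a..(a+Δt), ‖((a - s)^2/2) • φ''' s‖ := by
          rw [hYdef]; exact intervalIntegral.norm_integral_le_integral_norm ham
      _ ≤ ∫ s in a..(a+Δt), Δt^2/2 * ‖φ''' s‖ := by
          apply intervalIntegral.integral_mono_on ham
            (mkintN _ (by fun_prop) ha0 ham hmT) (mkintR ha0 ham hmT)
          intro s hs
          rw [norm_smul, Real.norm_eq_abs]
          apply mul_le_mul_of_nonneg_right _ (norm_nonneg _)
          rw [abs_le]
          constructor <;> nlinarith [hs.1, hs.2]
      _ = Δt^2/2 * ∫ s in a..(a+Δt), ‖φ''' s‖ := by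
          rw [← intervalIntegral.integral_const_mul]
  set L1 : ℝ := ∫ s in (a+Δt)..(a+2*Δt), ‖φ''' s‖ with hL1def
  set L2 : ℝ := ∫ s in a..(a+Δt), ‖φ''' s‖ with hL2def
  have hL1nn : 0 ≤ L1 :=
    intervalIntegral.integral_nonneg hmb fun _ _ => norm_nonneg _
  have hL2nn : 0 ≤ L2 :=
    intervalIntegral.integral_nonneg ham fun _ _ => norm_nonneg _
  have hnorm : ‖(Δt ^ 2)⁻¹ • (φ (a+2*Δt) - (2:ℝ) • φ (a+Δt) + φ a)
        - Δt⁻¹ • (φ' (a+2*Δt) - φ' (a+Δt))‖ ≤ (L1 + L2)/2 := by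
    rw [hAval, norm_smul, Real.norm_eq_abs, abs_of_nonneg (by positivity : (0:ℝ) ≤ (Δt^2)⁻¹)]
    have h1 : ‖X - Y‖ ≤ Δt^2/2 * L1 + Δt^2/2 * L2 :=
      (norm_sub_le X Y).trans (add_le_add hXle hYle)
    have h2 : (Δt^2)⁻¹ * ‖X - Y‖ ≤ (Δt^2)⁻¹ * (Δt^2/2 * L1 + Δt^2/2 * L2) :=
      mul_le_mul_of_nonneg_left h1 (by positivity)
    calc (Δt^2)⁻¹ * ‖X - Y‖ ≤ (Δt^2)⁻¹ * (Δt^2/2 * L1 + Δt^2/2 * L2) := h2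
      _ = (L1 + L2)/2 := by field_simp
  -- Cauchy–Schwarz
  have CS1 : L1^2 ≤ Δt * ∫ s in (a+Δt)..(a+2*Δt), ‖φ''' s‖^2 := by
    have := sdc_cs hmb (mkintNrm hm0 hmb hbT') (mkintSq hm0 hmb hbT')
    rw [show a + 2*Δt - (a + Δt) = Δt from by ring] at this
    exact this
  have CS2 : L2^2 ≤ Δt * ∫ s in a..(a+Δt), ‖φ''' s‖^2 := by
    have := sdc_cs ham (mkintNrm ha0 ham hmT) (mkintSq ha0 ham hmT)
    rw [show a + Δt - a = Δt from by ring] at this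
    exact this
  have hsq : ‖(Δt ^ 2)⁻¹ • (φ (a+2*Δt) - (2:ℝ) • φ (a+Δt) + φ a)
        - Δt⁻¹ • (φ' (a+2*Δt) - φ' (a+Δt))‖ ^ 2 ≤ ((L1 + L2)/2)^2 :=
    pow_le_pow_left₀ (norm_nonneg _) hnorm 2
  nlinarith [hsq, CS1, CS2, sq_nonneg (L1 - L2)]

/-- Consistency estimate for the discrete second time difference: for φ three
times continuously differentiable on [0,T], with Δt = T/N, tₙ = n·Δt and N ≥ 2,
Δt · Σ_{n=1}^{N−1} ‖d_{tt} φ^{n+1} − (φ′(t_{n+1}) − φ′(t_n))/Δt‖²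
  ≤ 2·Δt² · ∫₀^T ‖φ‴‖². -/
theorem second_difference_consistency
    {E : Type*} [NormedAddCommGroup E] [NormedSpace ℝ E] [CompleteSpace E]
    (T : ℝ) (hT : 0 < T) (N : ℕ) (hN : 2 ≤ N)
    (Δt : ℝ) (hΔt : Δt = T / N)
    (φ φ' φ'' φ''' : ℝ → E)
    (hφ' : ∀ t ∈ Set.Icc (0:ℝ) T, HasDerivWithinAt φ (φ' t) (Set.Icc (0:ℝ) T) t)
    (hφ'' : ∀ t ∈ Set.Icc (0:ℝ) T, HasDerivWithinAt φ' (φ'' t) (Set.Icc (0:ℝ) T) t)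
    (hφ''' : ∀ t ∈ Set.Icc (0:ℝ) T, HasDerivWithinAt φ'' (φ''' t) (Set.Icc (0:ℝ) T) t)
    (hφ'''c : ContinuousOn φ''' (Set.Icc (0:ℝ) T)) :
    Δt * ∑ n ∈ Finset.Ico 1 N,
        ‖(Δt ^ 2)⁻¹ • (φ (((n : ℝ) + 1) * Δt) - (2 : ℝ) • φ ((n : ℝ) * Δt)
              + φ (((n : ℝ) - 1) * Δt))
          - Δt⁻¹ • (φ' (((n : ℝ) + 1) * Δt) - φ' ((n : ℝ) * Δt))‖ ^ 2
      ≤ 2 * Δt ^ 2 * ∫ t in (0:ℝ)..T, ‖φ''' t‖ ^ 2 := by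
  have hN0 : (0:ℝ) < (N:ℝ) := by positivity
  have hΔt0 : 0 < Δt := by rw [hΔt]; positivity
  have hT' : T = N * Δt := by rw [hΔt]; field_simp
  set I : ℕ → ℝ := fun m => ∫ s in ((m:ℝ)*Δt)..(((m:ℝ)+1)*Δt), ‖φ''' s‖ ^ 2 with hI
  have hInn : ∀ m : ℕ, 0 ≤ I m := by
    intro m
    apply intervalIntegral.integral_nonneg (by nlinarith [hΔt0]) (fun s _ => by positivity)
  have key : ∀ n ∈ Finset.Ico 1 N,
      ‖(Δt ^ 2)⁻¹ • (φ (((n : ℝ) + 1) * Δt) - (2 : ℝ) • φ ((n : ℝ) * Δt)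
            + φ (((n : ℝ) - 1) * Δt))
        - Δt⁻¹ • (φ' (((n : ℝ) + 1) * Δt) - φ' ((n : ℝ) * Δt))‖ ^ 2
      ≤ Δt / 2 * (I n + I (n-1)) := by
    intro n hn
    obtain ⟨hn1, hnN⟩ := Finset.mem_Ico.mp hn
    have hn1' : (1:ℝ) ≤ (n:ℝ) := by exact_mod_cast hn1
    have hnN' : (n:ℝ) + 1 ≤ (N:ℝ) := by exact_mod_cast hnN
    have hIn : I n = ∫ s in ((n:ℝ)*Δt)..(((n:ℝ)+1)*Δt), ‖φ''' s‖ ^ 2 := by rw [hI]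
    have hIn1 : I (n-1) = ∫ s in (((n:ℝ)-1)*Δt)..((n:ℝ)*Δt), ‖φ''' s‖ ^ 2 := by
      rw [hI]
      have hc : ((n-1 : ℕ) : ℝ) = (n:ℝ) - 1 := by
        rw [Nat.cast_sub hn1, Nat.cast_one]
      simp only
      rw [hc, show (n:ℝ) - 1 + 1 = (n:ℝ) from by ring]
    rw [hIn, hIn1]
    exact sdc_key hφ' hφ'' hφ''' hφ'''c hΔt0
      (show (n:ℝ)*Δt = ((n:ℝ)-1)*Δt + Δt from by ring)
      (show ((n:ℝ)+1)*Δt = ((n:ℝ)-1)*Δt + 2*Δt from by ring)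
      (mul_nonneg (by linarith) hΔt0.le)
      (by rw [hT']; nlinarith)
  have hsum := Finset.sum_le_sum key
  have h1 : ∑ n ∈ Finset.Ico 1 N, I n ≤ ∑ k ∈ Finset.range N, I k := by
    apply Finset.sum_le_sum_of_subset_of_nonneg
    · rw [Finset.range_eq_Ico]
      exact Finset.Ico_subset_Ico (Nat.zero_le 1) le_rfl
    · exact fun i _ _ => hInn i
  have h2 : ∑ n ∈ Finset.Ico 1 N, I (n-1) ≤ ∑ k ∈ Finset.range N, I k := by
    rw [Finset.sum_Ico_eq_sum_range]
    simp only [Nat.add_sub_cancel_left]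
    apply Finset.sum_le_sum_of_subset_of_nonneg
    · exact Finset.range_subset_range.mpr (Nat.sub_le N 1)
    · exact fun i _ _ => hInn i
  have hadj : ∀ k < N, IntervalIntegrable (fun s => ‖φ''' s‖^2) MeasureTheory.volume
      ((fun k : ℕ => (k:ℝ)*Δt) k) ((fun k : ℕ => (k:ℝ)*Δt) (k+1)) := by
    intro k hk
    simp only
    apply ContinuousOn.intervalIntegrable
    have hk1 : (k:ℝ) + 1 ≤ (N:ℝ) := by exact_mod_cast hk
    rw [Set.uIcc_of_le (by push_cast; nlinarith : (k:ℝ)*Δt ≤ ((k+1:ℕ):ℝ)*Δt)]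
    apply (hφ'''c.norm.pow 2).mono
    apply Set.Icc_subset_Icc (by positivity)
    push_cast
    rw [hT']; nlinarith
  have hTS : ∑ k ∈ Finset.range N, I k = ∫ s in (0:ℝ)..T, ‖φ''' s‖ ^ 2 := by
    have h := intervalIntegral.sum_integral_adjacent_intervals (μ := MeasureTheory.volume)
      (f := fun s => ‖φ''' s‖^2) (a := fun k : ℕ => (k:ℝ)*Δt) (n := N) hadj
    push_cast at h
    rw [zero_mul, ← hT'] at h
    rw [← h, hI]
  have hSnn : 0 ≤ ∫ s in (0:ℝ)..T, ‖φ''' s‖ ^ 2 :=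
    intervalIntegral.integral_nonneg hT.le fun s _ => by positivity
  have hchain : ∑ n ∈ Finset.Ico 1 N,
      ‖(Δt ^ 2)⁻¹ • (φ (((n : ℝ) + 1) * Δt) - (2 : ℝ) • φ ((n : ℝ) * Δt)
            + φ (((n : ℝ) - 1) * Δt))
        - Δt⁻¹ • (φ' (((n : ℝ) + 1) * Δt) - φ' ((n : ℝ) * Δt))‖ ^ 2
      ≤ Δt * ∫ s in (0:ℝ)..T, ‖φ''' s‖ ^ 2 := by
    calc ∑ n ∈ Finset.Ico 1 N,
        ‖(Δt ^ 2)⁻¹ • (φ (((n : ℝ) + 1) * Δt) - (2 : ℝ) • φ ((n : ℝ) * Δt)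
              + φ (((n : ℝ) - 1) * Δt))
          - Δt⁻¹ • (φ' (((n : ℝ) + 1) * Δt) - φ' ((n : ℝ) * Δt))‖ ^ 2
        ≤ ∑ n ∈ Finset.Ico 1 N, Δt / 2 * (I n + I (n-1)) := hsum
      _ = Δt / 2 * ((∑ n ∈ Finset.Ico 1 N, I n) + ∑ n ∈ Finset.Ico 1 N, I (n-1)) := by
          rw [← Finset.mul_sum, Finset.sum_add_distrib]
      _ ≤ Δt / 2 * ((∑ k ∈ Finset.range N, I k) + ∑ k ∈ Finset.range N, I k) :=
          mul_le_mul_of_nonneg_left (add_le_add h1 h2) (by positivity)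
      _ = Δt * ∫ s in (0:ℝ)..T, ‖φ''' s‖ ^ 2 := by rw [hTS]; ring
  calc Δt * ∑ n ∈ Finset.Ico 1 N,
      ‖(Δt ^ 2)⁻¹ • (φ (((n : ℝ) + 1) * Δt) - (2 : ℝ) • φ ((n : ℝ) * Δt)
            + φ (((n : ℝ) - 1) * Δt))
        - Δt⁻¹ • (φ' (((n : ℝ) + 1) * Δt) - φ' ((n : ℝ) * Δt))‖ ^ 2
      ≤ Δt * (Δt * ∫ s in (0:ℝ)..T, ‖φ''' s‖ ^ 2) :=
        mul_le_mul_of_nonneg_left hchain hΔt0.le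
    _ ≤ 2 * Δt ^ 2 * ∫ t in (0:ℝ)..T, ‖φ''' t‖ ^ 2 := by nlinarith [hSnn, hΔt0, sq_nonneg Δt]
end

section
/- Assume N ≥ 2 and let φ : ℝ → E be twice continuously differentiable on [0,T]. Then Δt³ · Σ_{n=1}^{N−1} ‖d_{tt} φ^{n+1}‖² ≤ 2·Δt² · ∫_0^T ‖φ″(t)‖² dt. (Boundedness of the scaled discrete second difference, proved in the consistency-error lemma of the paper.) -/
open Set MeasureTheory intervalIntegral

/-- Cauchy–Schwarz for interval integrals of continuous functions. -/
lemma cs_interval {a b : ℝ} (hab : a ≤ b) {f g : ℝ → ℝ}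
    (hf : ContinuousOn f (Icc a b)) (hg : ContinuousOn g (Icc a b)) :
    ∫ s in a..b, f s * g s ≤
      Real.sqrt (∫ s in a..b, f s ^ 2) * Real.sqrt (∫ s in a..b, g s ^ 2) := by
  set A := ∫ s in a..b, f s ^ 2 with hA
  set C := ∫ s in a..b, g s ^ 2 with hC
  set B := ∫ s in a..b, f s * g s with hB
  have huIcc : uIcc a b = Icc a b := uIcc_of_le hab
  have hfi : IntervalIntegrable (fun s => f s ^ 2) volume a b :=
    ((hf.pow 2).mono huIcc.subset).intervalIntegrable
  have hgi : IntervalIntegrable (fun s => g s ^ 2) volume a b :=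
    ((hg.pow 2).mono huIcc.subset).intervalIntegrable
  have hfgi : IntervalIntegrable (fun s => f s * g s) volume a b :=
    ((hf.mul hg).mono huIcc.subset).intervalIntegrable
  have hA0 : 0 ≤ A := integral_nonneg hab fun s _ => sq_nonneg _
  have hC0 : 0 ≤ C := integral_nonneg hab fun s _ => sq_nonneg _
  have key : ∀ t : ℝ, 0 ≤ A * (t * t) + (-2 * B) * t + C := by
    intro t
    have h1 : 0 ≤ ∫ s in a..b, (t * f s - g s) ^ 2 :=
      integral_nonneg hab fun s _ => sq_nonneg _
    have h2 : ∫ s in a..b, (t * f s - g s) ^ 2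
        = t ^ 2 * A - 2 * t * B + C := by
      have : ∀ s : ℝ, (t * f s - g s) ^ 2
          = t ^ 2 * f s ^ 2 - 2 * t * (f s * g s) + g s ^ 2 := fun s => by ring
      rw [intervalIntegral.integral_congr (fun s _ => this s)]
      rw [intervalIntegral.integral_add ((hfi.const_mul _).sub (hfgi.const_mul _)) hgi,
        intervalIntegral.integral_sub (hfi.const_mul _) (hfgi.const_mul _),
        intervalIntegral.integral_const_mul, intervalIntegral.integral_const_mul]
    nlinarith [h1, h2]
  have hdisc := discrim_le_zero key
  rw [discrim] at hdisc
  have hBAC : B ^ 2 ≤ A * C := by nlinarith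
  calc B ≤ |B| := le_abs_self _
    _ = Real.sqrt (B ^ 2) := (Real.sqrt_sq_eq_abs B).symm
    _ ≤ Real.sqrt (A * C) := Real.sqrt_le_sqrt hBAC
    _ = Real.sqrt A * Real.sqrt C := Real.sqrt_mul hA0 _

section Taylor
variable {E : Type*} [NormedAddCommGroup E] [NormedSpace ℝ E] [CompleteSpace E]
variable {T : ℝ} {φ φ' φ'' : ℝ → E}

/-- Taylor expansion to the right with integral remainder. -/
lemma taylor_right
    (hφ' : ∀ t ∈ Set.Icc (0:ℝ) T, HasDerivWithinAt φ (φ' t) (Set.Icc (0:ℝ) T) t)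
    (hφ'' : ∀ t ∈ Set.Icc (0:ℝ) T, HasDerivWithinAt φ' (φ'' t) (Set.Icc (0:ℝ) T) t)
    (hφ''c : ContinuousOn φ'' (Set.Icc (0:ℝ) T))
    {a b : ℝ} (h0 : 0 ≤ a) (hab : a ≤ b) (hbT : b ≤ T) :
    ∫ s in a..b, (b - s) • φ'' s = φ b - φ a - (b - a) • φ' a := by
  have hsub : Icc a b ⊆ Icc 0 T := Icc_subset_Icc h0 hbT
  have hφc : ContinuousOn φ (Icc 0 T) := fun t ht => (hφ' t ht).continuousWithinAt
  have hφ'cc : ContinuousOn φ' (Icc 0 T) := fun t ht => (hφ'' t ht).continuousWithinAt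
  set g : ℝ → E := fun s => φ s + (b - s) • φ' s with hg
  have hgc : ContinuousOn g (Icc a b) :=
    (hφc.mono hsub).add ((continuousOn_const.sub continuousOn_id).smul (hφ'cc.mono hsub))
  have hderiv : ∀ s ∈ Ioo a b, HasDerivWithinAt g ((b - s) • φ'' s) (Ioi s) s := by
    intro s hs
    have hs0T : s ∈ Ioo (0:ℝ) T := ⟨lt_of_le_of_lt h0 hs.1, lt_of_lt_of_le hs.2 hbT⟩
    have hmem : Icc (0:ℝ) T ∈ nhds s := Icc_mem_nhds hs0T.1 hs0T.2
    have hsIcc : s ∈ Icc (0:ℝ) T := Ioo_subset_Icc_self hs0T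
    have h1 : HasDerivAt φ (φ' s) s := (hφ' s hsIcc).hasDerivAt hmem
    have h2 : HasDerivAt φ' (φ'' s) s := (hφ'' s hsIcc).hasDerivAt hmem
    have h3 : HasDerivAt (fun u => (b - u) • φ' u)
        ((b - s) • φ'' s + (-1 : ℝ) • φ' s) s :=
      ((hasDerivAt_id s).const_sub b).smul h2
    have h4 : HasDerivAt g (φ' s + ((b - s) • φ'' s + (-1 : ℝ) • φ' s)) s := h1.add h3
    have : φ' s + ((b - s) • φ'' s + (-1 : ℝ) • φ' s) = (b - s) • φ'' s := by
      simp only [neg_one_smul]; abel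
    rw [this] at h4
    exact h4.hasDerivWithinAt
  have hint : IntervalIntegrable (fun s => (b - s) • φ'' s) volume a b := by
    apply ContinuousOn.intervalIntegrable
    rw [uIcc_of_le hab]
    exact (continuousOn_const.sub continuousOn_id).smul (hφ''c.mono hsub)
  have := intervalIntegral.integral_eq_sub_of_hasDeriv_right_of_le hab hgc hderiv hint
  rw [this, hg]
  simp only [sub_self, zero_smul, add_zero]
  abel

/-- Taylor expansion to the left with integral remainder. -/
lemma taylor_left
    (hφ' : ∀ t ∈ Set.Icc (0:ℝ) T, HasDerivWithinAt φ (φ' t) (Set.Icc (0:ℝ) T) t)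
    (hφ'' : ∀ t ∈ Set.Icc (0:ℝ) T, HasDerivWithinAt φ' (φ'' t) (Set.Icc (0:ℝ) T) t)
    (hφ''c : ContinuousOn φ'' (Set.Icc (0:ℝ) T))
    {a b : ℝ} (h0 : 0 ≤ a) (hab : a ≤ b) (hbT : b ≤ T) :
    ∫ s in a..b, (s - a) • φ'' s = φ a - φ b + (b - a) • φ' b := by
  have hsub : Icc a b ⊆ Icc 0 T := Icc_subset_Icc h0 hbT
  have hφc : ContinuousOn φ (Icc 0 T) := fun t ht => (hφ' t ht).continuousWithinAt
  have hφ'cc : ContinuousOn φ' (Icc 0 T) := fun t ht => (hφ'' t ht).continuousWithinAt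
  set g : ℝ → E := fun s => φ s - (s - a) • φ' s with hg
  have hgc : ContinuousOn g (Icc a b) :=
    (hφc.mono hsub).sub ((continuousOn_id.sub continuousOn_const).smul (hφ'cc.mono hsub))
  have hderiv : ∀ s ∈ Ioo a b, HasDerivWithinAt g (-((s - a) • φ'' s)) (Ioi s) s := by
    intro s hs
    have hs0T : s ∈ Ioo (0:ℝ) T := ⟨lt_of_le_of_lt h0 hs.1, lt_of_lt_of_le hs.2 hbT⟩
    have hmem : Icc (0:ℝ) T ∈ nhds s := Icc_mem_nhds hs0T.1 hs0T.2
    have hsIcc : s ∈ Icc (0:ℝ) T := Ioo_subset_Icc_self hs0T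
    have h1 : HasDerivAt φ (φ' s) s := (hφ' s hsIcc).hasDerivAt hmem
    have h2 : HasDerivAt φ' (φ'' s) s := (hφ'' s hsIcc).hasDerivAt hmem
    have h3 : HasDerivAt (fun u => (u - a) • φ' u)
        ((s - a) • φ'' s + (1 : ℝ) • φ' s) s :=
      ((hasDerivAt_id s).sub_const a).smul h2
    have h4 : HasDerivAt g (φ' s - ((s - a) • φ'' s + (1 : ℝ) • φ' s)) s := h1.sub h3
    have : φ' s - ((s - a) • φ'' s + (1 : ℝ) • φ' s) = -((s - a) • φ'' s) := by
      simp only [one_smul]; abel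
    rw [this] at h4
    exact h4.hasDerivWithinAt
  have hint' : IntervalIntegrable (fun s => (s - a) • φ'' s) volume a b := by
    apply ContinuousOn.intervalIntegrable
    rw [uIcc_of_le hab]
    exact (continuousOn_id.sub continuousOn_const).smul (hφ''c.mono hsub)
  have hint : IntervalIntegrable (fun s => -((s - a) • φ'' s)) volume a b := hint'.neg
  have h5 := intervalIntegral.integral_eq_sub_of_hasDeriv_right_of_le hab hgc hderiv hint
  rw [intervalIntegral.integral_neg] at h5
  have h6 : ∫ s in a..b, (s - a) • φ'' s = g a - g b := by
    have := neg_eq_iff_eq_neg.mp h5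
    rw [this]; abel
  rw [h6, hg]
  simp only [sub_self, zero_smul, sub_zero]
  abel

end Taylor

lemma ker_right_int {a b : ℝ} (hab : a ≤ b) :
    ∫ s in a..b, (b - s) ^ 2 = (b - a) ^ 3 / 3 := by
  have hD : ∀ s : ℝ, HasDerivAt (fun u => -((b - u) ^ 3) / 3) ((b - s) ^ 2) s := by
    intro s
    have h1 : HasDerivAt (fun u : ℝ => b - u) (-1) s := (hasDerivAt_id s).const_sub b
    have h2 := (h1.pow 3).neg.div_const 3
    refine h2.congr_deriv ?_
    norm_num
  have hint : IntervalIntegrable (fun s => (b - s) ^ 2) volume a b :=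
    (Continuous.intervalIntegrable (by continuity) a b)
  rw [intervalIntegral.integral_eq_sub_of_hasDerivAt (fun s _ => hD s) hint]
  ring

lemma ker_left_int {a b : ℝ} (hab : a ≤ b) :
    ∫ s in a..b, (s - a) ^ 2 = (b - a) ^ 3 / 3 := by
  have hD : ∀ s : ℝ, HasDerivAt (fun u => (u - a) ^ 3 / 3) ((s - a) ^ 2) s := by
    intro s
    have h1 : HasDerivAt (fun u : ℝ => u - a) 1 s := (hasDerivAt_id s).sub_const a
    have h2 := (h1.pow 3).div_const 3
    refine h2.congr_deriv ?_
    norm_num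
  have hint : IntervalIntegrable (fun s => (s - a) ^ 2) volume a b :=
    (Continuous.intervalIntegrable (by continuity) a b)
  rw [intervalIntegral.integral_eq_sub_of_hasDerivAt (fun s _ => hD s) hint]
  ring

section Halves
variable {E : Type*} [NormedAddCommGroup E] [NormedSpace ℝ E] [CompleteSpace E]
variable {T : ℝ} {φ'' : ℝ → E}

lemma half_right (hφ''c : ContinuousOn φ'' (Set.Icc (0:ℝ) T))
    {a b : ℝ} (h0 : 0 ≤ a) (hab : a ≤ b) (hbT : b ≤ T) :
    ‖∫ s in a..b, (b - s) • φ'' s‖ ≤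
      Real.sqrt ((b - a) ^ 3 / 3) * Real.sqrt (∫ s in a..b, ‖φ'' s‖ ^ 2) := by
  have hsub : Icc a b ⊆ Icc 0 T := Icc_subset_Icc h0 hbT
  have hgc : ContinuousOn (fun s => ‖φ'' s‖) (Icc a b) := (hφ''c.mono hsub).norm
  calc ‖∫ s in a..b, (b - s) • φ'' s‖
      ≤ ∫ s in a..b, ‖(b - s) • φ'' s‖ :=
        intervalIntegral.norm_integral_le_integral_norm hab
    _ = ∫ s in a..b, (b - s) * ‖φ'' s‖ := by
        apply intervalIntegral.integral_congr
        intro s hs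
        rw [uIcc_of_le hab] at hs
        simp only []
        rw [norm_smul, Real.norm_eq_abs, abs_of_nonneg (by linarith [hs.2] : (0:ℝ) ≤ b - s)]
    _ ≤ Real.sqrt (∫ s in a..b, (b - s) ^ 2) * Real.sqrt (∫ s in a..b, ‖φ'' s‖ ^ 2) :=
        cs_interval hab (continuousOn_const.sub continuousOn_id) hgc
    _ = Real.sqrt ((b - a) ^ 3 / 3) * Real.sqrt (∫ s in a..b, ‖φ'' s‖ ^ 2) := by
        rw [ker_right_int hab]

lemma half_left (hφ''c : ContinuousOn φ'' (Set.Icc (0:ℝ) T))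
    {a b : ℝ} (h0 : 0 ≤ a) (hab : a ≤ b) (hbT : b ≤ T) :
    ‖∫ s in a..b, (s - a) • φ'' s‖ ≤
      Real.sqrt ((b - a) ^ 3 / 3) * Real.sqrt (∫ s in a..b, ‖φ'' s‖ ^ 2) := by
  have hsub : Icc a b ⊆ Icc 0 T := Icc_subset_Icc h0 hbT
  have hgc : ContinuousOn (fun s => ‖φ'' s‖) (Icc a b) := (hφ''c.mono hsub).norm
  calc ‖∫ s in a..b, (s - a) • φ'' s‖
      ≤ ∫ s in a..b, ‖(s - a) • φ'' s‖ :=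
        intervalIntegral.norm_integral_le_integral_norm hab
    _ = ∫ s in a..b, (s - a) * ‖φ'' s‖ := by
        apply intervalIntegral.integral_congr
        intro s hs
        rw [uIcc_of_le hab] at hs
        simp only []
        rw [norm_smul, Real.norm_eq_abs, abs_of_nonneg (by linarith [hs.1] : (0:ℝ) ≤ s - a)]
    _ ≤ Real.sqrt (∫ s in a..b, (s - a) ^ 2) * Real.sqrt (∫ s in a..b, ‖φ'' s‖ ^ 2) :=
        cs_interval hab (continuousOn_id.sub continuousOn_const) hgc
    _ = Real.sqrt ((b - a) ^ 3 / 3) * Real.sqrt (∫ s in a..b, ‖φ'' s‖ ^ 2) := by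
        rw [ker_left_int hab]

end Halves

/-- Boundedness of the scaled discrete second difference: for φ twice
continuously differentiable on [0,T], with Δt = T/N, tₙ = n·Δt and N ≥ 2,
Δt³ · Σ_{n=1}^{N−1} ‖d_{tt} φ^{n+1}‖² ≤ 2·Δt² · ∫₀^T ‖φ″‖². -/
theorem second_difference_bound
    {E : Type*} [NormedAddCommGroup E] [NormedSpace ℝ E] [CompleteSpace E]
    (T : ℝ) (hT : 0 < T) (N : ℕ) (hN : 2 ≤ N)
    (Δt : ℝ) (hΔt : Δt = T / N)
    (φ φ' φ'' : ℝ → E)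
    (hφ' : ∀ t ∈ Set.Icc (0:ℝ) T, HasDerivWithinAt φ (φ' t) (Set.Icc (0:ℝ) T) t)
    (hφ'' : ∀ t ∈ Set.Icc (0:ℝ) T, HasDerivWithinAt φ' (φ'' t) (Set.Icc (0:ℝ) T) t)
    (hφ''c : ContinuousOn φ'' (Set.Icc (0:ℝ) T)) :
    Δt ^ 3 * ∑ n ∈ Finset.Ico 1 N,
        ‖(Δt ^ 2)⁻¹ • (φ (((n : ℝ) + 1) * Δt) - (2 : ℝ) • φ ((n : ℝ) * Δt)
            + φ (((n : ℝ) - 1) * Δt))‖ ^ 2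
      ≤ 2 * Δt ^ 2 * ∫ t in (0:ℝ)..T, ‖φ'' t‖ ^ 2 := by
  have hN0 : (0:ℝ) < (N:ℝ) := by
    have : 0 < N := lt_of_lt_of_le (by norm_num) hN
    exact_mod_cast this
  have hΔ : 0 < Δt := by rw [hΔt]; positivity
  have hNΔ : (N:ℝ) * Δt = T := by rw [hΔt]; field_simp
  set S := ∫ t in (0:ℝ)..T, ‖φ'' t‖ ^ 2 with hSdef
  have hF : ContinuousOn (fun t => ‖φ'' t‖ ^ 2) (Icc (0:ℝ) T) := (hφ''c.norm).pow 2
  have hFi : IntervalIntegrable (fun t => ‖φ'' t‖ ^ 2) volume 0 T := by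
    apply ContinuousOn.intervalIntegrable
    rwa [uIcc_of_le hT.le]
  have hS0 : 0 ≤ S := intervalIntegral.integral_nonneg hT.le fun _ _ => sq_nonneg _
  -- per-term bound
  have key : ∀ n ∈ Finset.Ico 1 N,
      ‖(Δt ^ 2)⁻¹ • (φ (((n : ℝ) + 1) * Δt) - (2 : ℝ) • φ ((n : ℝ) * Δt)
          + φ (((n : ℝ) - 1) * Δt))‖ ^ 2
        ≤ 2 / (3 * Δt) * ((∫ s in ((n:ℝ) * Δt)..(((n:ℝ) + 1) * Δt), ‖φ'' s‖ ^ 2)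
            + ∫ s in (((n:ℝ) - 1) * Δt)..((n:ℝ) * Δt), ‖φ'' s‖ ^ 2) := by
    intro n hn
    obtain ⟨hn1, hnN⟩ := Finset.mem_Ico.mp hn
    have h1n : (1:ℝ) ≤ (n:ℝ) := by exact_mod_cast hn1
    have hnN' : (n:ℝ) + 1 ≤ (N:ℝ) := by exact_mod_cast Nat.succ_le_of_lt hnN
    set a := ((n:ℝ) - 1) * Δt with hadef
    set m := (n:ℝ) * Δt with hmdef
    set b := ((n:ℝ) + 1) * Δt with hbdef
    have ha0 : 0 ≤ a := mul_nonneg (by linarith) hΔ.le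
    have ham : a ≤ m := mul_le_mul_of_nonneg_right (by linarith) hΔ.le
    have hmb : m ≤ b := mul_le_mul_of_nonneg_right (by linarith) hΔ.le
    have hbT : b ≤ T := by rw [← hNΔ]; exact mul_le_mul_of_nonneg_right hnN' hΔ.le
    have h0m : 0 ≤ m := ha0.trans ham
    have hmT : m ≤ T := hmb.trans hbT
    have hbm : b - m = Δt := by rw [hbdef, hmdef]; ring
    have hma : m - a = Δt := by rw [hmdef, hadef]; ring
    have hR := taylor_right hφ' hφ'' hφ''c h0m hmb hbT
    have hL := taylor_left hφ' hφ'' hφ''c ha0 ham hmT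
    have hD : φ b - (2:ℝ) • φ m + φ a
        = (∫ s in m..b, (b - s) • φ'' s) + ∫ s in a..m, (s - a) • φ'' s := by
      rw [hR, hL, hbm, hma]
      module
    set A := ∫ s in m..b, ‖φ'' s‖ ^ 2 with hAdef
    set B := ∫ s in a..m, ‖φ'' s‖ ^ 2 with hBdef
    have hA0 : 0 ≤ A := intervalIntegral.integral_nonneg hmb fun _ _ => sq_nonneg _
    have hB0 : 0 ≤ B := intervalIntegral.integral_nonneg ham fun _ _ => sq_nonneg _
    have h2 : ‖φ b - (2:ℝ) • φ m + φ a‖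
        ≤ Real.sqrt (Δt ^ 3 / 3) * (Real.sqrt A + Real.sqrt B) := by
      rw [hD]
      calc ‖(∫ s in m..b, (b - s) • φ'' s) + ∫ s in a..m, (s - a) • φ'' s‖
          ≤ ‖∫ s in m..b, (b - s) • φ'' s‖ + ‖∫ s in a..m, (s - a) • φ'' s‖ :=
            norm_add_le _ _
        _ ≤ Real.sqrt ((b - m) ^ 3 / 3) * Real.sqrt A
            + Real.sqrt ((m - a) ^ 3 / 3) * Real.sqrt B :=
            add_le_add (half_right hφ''c h0m hmb hbT) (half_left hφ''c ha0 ham hmT)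
        _ = Real.sqrt (Δt ^ 3 / 3) * (Real.sqrt A + Real.sqrt B) := by
            rw [hbm, hma]; ring
    have hk0 : (0:ℝ) ≤ Δt ^ 3 / 3 := by positivity
    have hsq : ‖φ b - (2:ℝ) • φ m + φ a‖ ^ 2 ≤ (Δt ^ 3 / 3) * (2 * (A + B)) := by
      have h3 : ‖φ b - (2:ℝ) • φ m + φ a‖ ^ 2
          ≤ (Real.sqrt (Δt ^ 3 / 3) * (Real.sqrt A + Real.sqrt B)) ^ 2 := by
        apply pow_le_pow_left₀ (norm_nonneg _) h2
      calc ‖φ b - (2:ℝ) • φ m + φ a‖ ^ 2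
          ≤ (Real.sqrt (Δt ^ 3 / 3) * (Real.sqrt A + Real.sqrt B)) ^ 2 := h3
        _ = (Δt ^ 3 / 3) * (Real.sqrt A + Real.sqrt B) ^ 2 := by
            rw [mul_pow, Real.sq_sqrt hk0]
        _ ≤ (Δt ^ 3 / 3) * (2 * (A + B)) := by
            apply mul_le_mul_of_nonneg_left _ hk0
            nlinarith [Real.sq_sqrt hA0, Real.sq_sqrt hB0,
              sq_nonneg (Real.sqrt A - Real.sqrt B)]
    calc ‖(Δt ^ 2)⁻¹ • (φ b - (2:ℝ) • φ m + φ a)‖ ^ 2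
        = ((Δt ^ 2)⁻¹) ^ 2 * ‖φ b - (2:ℝ) • φ m + φ a‖ ^ 2 := by
          rw [norm_smul, Real.norm_eq_abs, abs_of_pos (by positivity), mul_pow]
      _ ≤ ((Δt ^ 2)⁻¹) ^ 2 * ((Δt ^ 3 / 3) * (2 * (A + B))) :=
          mul_le_mul_of_nonneg_left hsq (by positivity)
      _ = 2 / (3 * Δt) * (A + B) := by
          field_simp
  -- sum the bounds
  have hsum := Finset.sum_le_sum key
  -- sum of right halves
  have hsumA : ∑ n ∈ Finset.Ico 1 N,
      (∫ s in ((n:ℝ) * Δt)..(((n:ℝ) + 1) * Δt), ‖φ'' s‖ ^ 2) ≤ S := by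
    have hint : ∀ k ∈ Finset.Ico 1 N, IntervalIntegrable (fun t => ‖φ'' t‖ ^ 2) volume
        ((k:ℝ) * Δt) (((k+1:ℕ):ℝ) * Δt) := by
      intro k hk
      obtain ⟨hk1, hkN⟩ := Finset.mem_Ico.mp hk
      have h1 : (0:ℝ) ≤ (k:ℝ) * Δt := by positivity
      have h2 : ((k+1:ℕ):ℝ) * Δt ≤ T := by
        rw [← hNΔ]
        have : ((k+1:ℕ):ℝ) ≤ (N:ℝ) := by exact_mod_cast Nat.succ_le_of_lt hkN
        exact mul_le_mul_of_nonneg_right this hΔ.le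
      have h3 : (k:ℝ) * Δt ≤ ((k+1:ℕ):ℝ) * Δt := by
        have : (k:ℝ) ≤ ((k+1:ℕ):ℝ) := by push_cast; linarith
        exact mul_le_mul_of_nonneg_right this hΔ.le
      apply ContinuousOn.intervalIntegrable
      rw [uIcc_of_le h3]
      exact hF.mono (Icc_subset_Icc h1 h2)
    have hadj := intervalIntegral.sum_integral_adjacent_intervals_Ico
      (a := fun i : ℕ => (i:ℝ) * Δt) (f := fun t => ‖φ'' t‖ ^ 2) (μ := volume)
      (show 1 ≤ N by omega) (fun k hk => hint k (by simpa using hk))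
    simp only [Nat.cast_one] at hadj
    have hcast : ∑ n ∈ Finset.Ico 1 N,
        (∫ s in ((n:ℝ) * Δt)..(((n:ℝ) + 1) * Δt), ‖φ'' s‖ ^ 2)
        = ∑ n ∈ Finset.Ico 1 N,
        (∫ s in ((n:ℝ) * Δt)..(((n+1:ℕ):ℝ) * Δt), ‖φ'' s‖ ^ 2) := by
      apply Finset.sum_congr rfl
      intro k _
      congr 1
      push_cast
      ring
    have h1N : (1:ℝ) ≤ (N:ℝ) := by exact_mod_cast (by omega : 1 ≤ N)
    have hΔT : Δt ≤ T := by
      rw [← hNΔ]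
      nlinarith
    rw [hcast, hadj, one_mul, hNΔ]
    exact intervalIntegral.integral_mono_interval hΔ.le hΔT le_rfl
      (Filter.Eventually.of_forall fun t => sq_nonneg _) hFi
  -- sum of left halves
  have hsumB : ∑ n ∈ Finset.Ico 1 N,
      (∫ s in (((n:ℝ) - 1) * Δt)..((n:ℝ) * Δt), ‖φ'' s‖ ^ 2) ≤ S := by
    have hint : ∀ k ∈ Finset.Ico 1 N, IntervalIntegrable (fun t => ‖φ'' t‖ ^ 2) volume
        (((k:ℝ) - 1) * Δt) ((((k+1:ℕ):ℝ) - 1) * Δt) := by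
      intro k hk
      obtain ⟨hk1, hkN⟩ := Finset.mem_Ico.mp hk
      have hk1' : (1:ℝ) ≤ (k:ℝ) := by exact_mod_cast hk1
      have hkN' : (k:ℝ) ≤ (N:ℝ) := by exact_mod_cast hkN.le
      have h1 : (0:ℝ) ≤ ((k:ℝ) - 1) * Δt := mul_nonneg (by linarith) hΔ.le
      have h2 : (((k+1:ℕ):ℝ) - 1) * Δt ≤ T := by
        rw [← hNΔ]
        apply mul_le_mul_of_nonneg_right _ hΔ.le
        push_cast
        linarith
      have h3 : ((k:ℝ) - 1) * Δt ≤ (((k+1:ℕ):ℝ) - 1) * Δt := by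
        apply mul_le_mul_of_nonneg_right _ hΔ.le
        push_cast
        linarith
      apply ContinuousOn.intervalIntegrable
      rw [uIcc_of_le h3]
      exact hF.mono (Icc_subset_Icc h1 h2)
    have hadj := intervalIntegral.sum_integral_adjacent_intervals_Ico
      (a := fun i : ℕ => ((i:ℝ) - 1) * Δt) (f := fun t => ‖φ'' t‖ ^ 2) (μ := volume)
      (show 1 ≤ N by omega) (fun k hk => hint k (by simpa using hk))
    simp only [Nat.cast_one] at hadj
    have hcast : ∑ n ∈ Finset.Ico 1 N,
        (∫ s in (((n:ℝ) - 1) * Δt)..((n:ℝ) * Δt), ‖φ'' s‖ ^ 2)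
        = ∑ n ∈ Finset.Ico 1 N,
        (∫ s in (((n:ℝ) - 1) * Δt)..((((n+1:ℕ):ℝ) - 1) * Δt), ‖φ'' s‖ ^ 2) := by
      apply Finset.sum_congr rfl
      intro k _
      congr 1
      push_cast
      ring
    have h1N : (1:ℝ) ≤ (N:ℝ) := by exact_mod_cast (by omega : 1 ≤ N)
    have hNT : ((N:ℝ) - 1) * Δt ≤ T := by
      rw [← hNΔ]
      apply mul_le_mul_of_nonneg_right _ hΔ.le
      linarith
    have hN1Δ : 0 ≤ ((N:ℝ) - 1) * Δt := mul_nonneg (by linarith) hΔ.le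
    rw [hcast, hadj, show ((1:ℝ) - 1) * Δt = 0 by ring]
    exact intervalIntegral.integral_mono_interval le_rfl hN1Δ hNT
      (Filter.Eventually.of_forall fun t => sq_nonneg _) hFi
  -- put everything together
  have htot : ∑ n ∈ Finset.Ico 1 N,
      ‖(Δt ^ 2)⁻¹ • (φ (((n : ℝ) + 1) * Δt) - (2 : ℝ) • φ ((n : ℝ) * Δt)
          + φ (((n : ℝ) - 1) * Δt))‖ ^ 2
      ≤ 2 / (3 * Δt) * (2 * S) := by
    calc _ ≤ ∑ n ∈ Finset.Ico 1 N, 2 / (3 * Δt)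
          * ((∫ s in ((n:ℝ) * Δt)..(((n:ℝ) + 1) * Δt), ‖φ'' s‖ ^ 2)
            + ∫ s in (((n:ℝ) - 1) * Δt)..((n:ℝ) * Δt), ‖φ'' s‖ ^ 2) := hsum
      _ = 2 / (3 * Δt) * ((∑ n ∈ Finset.Ico 1 N,
              ∫ s in ((n:ℝ) * Δt)..(((n:ℝ) + 1) * Δt), ‖φ'' s‖ ^ 2)
            + ∑ n ∈ Finset.Ico 1 N,
              ∫ s in (((n:ℝ) - 1) * Δt)..((n:ℝ) * Δt), ‖φ'' s‖ ^ 2) := by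
          rw [← Finset.mul_sum, Finset.sum_add_distrib]
      _ ≤ 2 / (3 * Δt) * (2 * S) := by
          apply mul_le_mul_of_nonneg_left _ (by positivity)
          linarith
  calc Δt ^ 3 * ∑ n ∈ Finset.Ico 1 N,
        ‖(Δt ^ 2)⁻¹ • (φ (((n : ℝ) + 1) * Δt) - (2 : ℝ) • φ ((n : ℝ) * Δt)
            + φ (((n : ℝ) - 1) * Δt))‖ ^ 2
      ≤ Δt ^ 3 * (2 / (3 * Δt) * (2 * S)) :=
        mul_le_mul_of_nonneg_left htot (by positivity)
    _ = 4 / 3 * (Δt ^ 2 * S) := by field_simp; ring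
    _ ≤ 2 * Δt ^ 2 * S := by nlinarith [sq_nonneg Δt]
end
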